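/- arXiv:2411.07460 — 3 statements merged into one kernel-verified Lean document; each statement's English description precedes it below -/
import Mathlib

section
/- (Jacobi–Anger expansion.) For all real numbers x and θ, the family (i^ν J_ν(x) e^{iνθ})_{ν∈ℤ} (where i^ν denotes the ν-th integer power of the imaginary unit) is summable in ℂ with sum equal to exp(i x cos θ); that is, exp(i x cos θ) = J₀(x) + Σ_{ν∈ℤ, ν≠0} i^ν J_ν(x) e^{iνθ}. -/
open Real Complex MeasureTheory intervalIntegral Set Filter

/-- The Bessel function of the first kind of integer order `ν`:
`J_ν(x) = (1/π) ∫₀^π cos (ν τ − x sin τ) dτ`. -/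
noncomputable def besselJ (ν : ℤ) (x : ℝ) : ℝ :=
  (1 / Real.pi) * ∫ τ in (0:ℝ)..Real.pi, Real.cos (ν * τ - x * Real.sin τ)

lemma odd_part (x : ℝ) (n : ℤ) :
    (∫ τ in (-Real.pi)..Real.pi, Real.sin (x * Real.sin τ + n * τ)) = 0 := by
  have h := intervalIntegral.integral_comp_neg (a := -Real.pi) (b := Real.pi)
    (fun τ => Real.sin (x * Real.sin τ + n * τ))
  have h2 : (∫ τ in (-Real.pi)..Real.pi, Real.sin (x * Real.sin (-τ) + n * (-τ)))
      = - ∫ τ in (-Real.pi)..Real.pi, Real.sin (x * Real.sin τ + n * τ) := by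
    rw [← intervalIntegral.integral_neg]
    refine intervalIntegral.integral_congr fun τ _ => ?_
    rw [Real.sin_neg, mul_neg, mul_neg, ← neg_add, Real.sin_neg]
  rw [h2, neg_neg] at h
  linarith [h]

lemma even_part (x : ℝ) (n : ℤ) :
    (∫ τ in (-Real.pi)..Real.pi, Real.cos (x * Real.sin τ + n * τ))
      = 2 * ∫ τ in (0:ℝ)..Real.pi, Real.cos (x * Real.sin τ + n * τ) := by
  have h := intervalIntegral.integral_comp_neg (a := (0:ℝ)) (b := Real.pi)
    (fun τ => Real.cos (x * Real.sin τ + n * τ))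
  have h2 : (∫ τ in (0:ℝ)..Real.pi, Real.cos (x * Real.sin (-τ) + n * (-τ)))
      = ∫ τ in (0:ℝ)..Real.pi, Real.cos (x * Real.sin τ + n * τ) := by
    refine intervalIntegral.integral_congr fun τ _ => ?_
    rw [Real.sin_neg, mul_neg, mul_neg, ← neg_add, Real.cos_neg]
  rw [h2, neg_zero] at h
  have hint : ∀ a b : ℝ, IntervalIntegrable
      (fun τ => Real.cos (x * Real.sin τ + n * τ)) volume a b := fun a b =>
    (Real.continuous_cos.comp (by fun_prop)).intervalIntegrable a b
  have := intervalIntegral.integral_add_adjacent_intervals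
    (hint (-Real.pi) 0) (hint 0 Real.pi)
  rw [← this, ← h]; ring

lemma flip_part (x : ℝ) (n : ℤ) :
    (∫ τ in (0:ℝ)..Real.pi, Real.cos (x * Real.sin τ + n * τ))
      = (-1)^n * ∫ τ in (0:ℝ)..Real.pi, Real.cos (n * τ - x * Real.sin τ) := by
  have h := intervalIntegral.integral_comp_sub_left (a := (0:ℝ)) (b := Real.pi)
    (fun τ => Real.cos (x * Real.sin τ + n * τ)) Real.pi
  rw [sub_self, sub_zero] at h
  rw [← h, ← intervalIntegral.integral_const_mul]
  refine intervalIntegral.integral_congr fun τ _ => ?_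
  rw [Real.sin_pi_sub]
  have : x * Real.sin τ + n * (Real.pi - τ) = n * Real.pi - (n * τ - x * Real.sin τ) := by ring
  rw [this, Real.cos_int_mul_pi_sub]

lemma Bval (x : ℝ) (n : ℤ) :
    (∫ τ in (-Real.pi)..Real.pi, Complex.exp (-Complex.I * (x * Real.sin τ + n * τ)))
      = 2 * Real.pi * (-1)^n * besselJ n x := by
  have key : ∀ τ : ℝ, Complex.exp (-Complex.I * (x * Real.sin τ + n * τ))
      = ((Real.cos (x * Real.sin τ + n * τ) : ℂ))
        - ((Real.sin (x * Real.sin τ + n * τ) : ℂ)) * Complex.I := by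
    intro τ
    have : (-Complex.I * ((x : ℂ) * (Real.sin τ : ℂ) + (n : ℂ) * (τ : ℂ)))
        = ((-(x * Real.sin τ + n * τ) : ℝ) : ℂ) * Complex.I := by push_cast; ring
    rw [this, Complex.exp_mul_I]
    push_cast
    rw [Complex.cos_neg, Complex.sin_neg]
    ring
  rw [intervalIntegral.integral_congr (fun τ _ => key τ)]
  rw [intervalIntegral.integral_sub, intervalIntegral.integral_mul_const,
    intervalIntegral.integral_ofReal, intervalIntegral.integral_ofReal]
  · rw [odd_part, even_part, flip_part, besselJ]
    push_cast
    have hπ : (Real.pi : ℂ) ≠ 0 := by exact_mod_cast Real.pi_ne_zero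
    field_simp
    ring
  · exact ((Complex.continuous_ofReal.comp (Real.continuous_cos.comp (by fun_prop))).intervalIntegrable _ _)
  · exact (((Complex.continuous_ofReal.comp (Real.continuous_sin.comp (by fun_prop))).mul continuous_const).intervalIntegrable _ _)

lemma Aval (x : ℝ) (n : ℤ) :
    (∫ t in (0:ℝ)..(2*Real.pi), Complex.exp (Complex.I * (x * Real.cos t - n * t)))
      = 2 * Real.pi * Complex.I ^ n * besselJ n x := by
  set h : ℝ → ℂ := fun t => Complex.exp (Complex.I * (x * Real.cos t - n * t)) with hh
  have hper : Function.Periodic h (2 * Real.pi) := by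
    intro t
    simp only [hh]
    rw [Real.cos_add_two_pi]
    push_cast
    rw [show (Complex.I * ((x:ℂ) * Complex.cos t - (n:ℂ) * ((t:ℂ) + 2*(Real.pi:ℂ))) : ℂ)
        = Complex.I * ((x:ℂ) * Complex.cos t - (n:ℂ) * t) + ((-n : ℤ):ℂ) * (2 * (Real.pi:ℂ) * Complex.I) by
      push_cast; ring, Complex.exp_add, Complex.exp_int_mul_two_pi_mul_I, mul_one]
  have h1 : (∫ t in (0:ℝ)..(2*Real.pi), h t)
      = ∫ t in (-Real.pi/2)..(-Real.pi/2 + 2*Real.pi), h t := by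
    rw [hper.intervalIntegral_add_eq (-Real.pi/2) 0, zero_add]
  have h2 : (∫ τ in (-Real.pi)..Real.pi, h (τ + Real.pi/2))
      = ∫ t in (-Real.pi/2)..(-Real.pi/2 + 2*Real.pi), h t := by
    rw [intervalIntegral.integral_comp_add_right h (Real.pi/2)]
    ring_nf
  have h3 : ∀ τ : ℝ, h (τ + Real.pi/2)
      = Complex.exp (-Complex.I * ((n:ℝ) * (Real.pi/2))) *
        Complex.exp (-Complex.I * (x * Real.sin τ + n * τ)) := by
    intro τ
    simp only [hh]
    rw [← Complex.exp_add, Real.cos_add_pi_div_two]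
    push_cast
    ring_nf
  have h4 : (∫ τ in (-Real.pi)..Real.pi, h (τ + Real.pi/2))
      = Complex.exp (-Complex.I * ((n:ℝ) * (Real.pi/2))) *
        (2 * Real.pi * (-1)^n * besselJ n x) := by
    rw [intervalIntegral.integral_congr (fun τ _ => h3 τ), intervalIntegral.integral_const_mul,
      Bval]
  have h5 : Complex.exp (-Complex.I * ((n:ℝ) * (Real.pi/2))) = Complex.I ^ (-n) := by
    rw [show (-Complex.I * ((n:ℝ) * (Real.pi/2)) : ℂ) = (-n : ℤ) * ((Real.pi/2 : ℝ) * Complex.I) by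
      push_cast; ring, Complex.exp_int_mul]
    congr 1
    rw [Complex.exp_mul_I]
    push_cast
    rw [Complex.cos_pi_div_two, Complex.sin_pi_div_two]
    ring
  have h6 : Complex.I ^ (-n) * (-1 : ℂ)^n = Complex.I ^ n := by
    rw [show ((-1 : ℂ)) = Complex.I * Complex.I by rw [Complex.I_mul_I], mul_zpow,
      ← mul_assoc, ← zpow_add₀ Complex.I_ne_zero]
    simp
  calc (∫ t in (0:ℝ)..(2*Real.pi), h t)
      = ∫ τ in (-Real.pi)..Real.pi, h (τ + Real.pi/2) := by rw [h1, h2]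
    _ = Complex.I ^ (-n) * (2 * Real.pi * (-1)^n * besselJ n x) := by rw [h4, h5]
    _ = 2 * Real.pi * Complex.I ^ n * besselJ n x := by
        rw [show (Complex.I ^ (-n) * (2 * Real.pi * (-1)^n * besselJ n x) : ℂ)
          = (Complex.I ^ (-n) * (-1)^n) * (2 * Real.pi * besselJ n x) by ring, h6]; ring

section coeffs
variable (x : ℝ)

private noncomputable def gJA (x : ℝ) : ℝ → ℂ := fun t => Complex.exp (Complex.I * x * Real.cos t)
private noncomputable def gJA1 (x : ℝ) : ℝ → ℂ :=
  fun t => (-(Complex.I * x * Real.sin t)) * gJA x t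
private noncomputable def gJA2 (x : ℝ) : ℝ → ℂ :=
  fun t => (-(Complex.I * x * Real.cos t) + (Complex.I * x * Real.sin t)^2) * gJA x t

lemma hasDerivAt_gJA (t : ℝ) : HasDerivAt (gJA x) (gJA1 x t) t := by
  have h1 : HasDerivAt (fun t : ℝ => ((Real.cos t : ℝ) : ℂ)) ((-Real.sin t : ℝ) : ℂ) t :=
    (Real.hasDerivAt_cos t).ofReal_comp
  have h2 : HasDerivAt (fun t : ℝ => Complex.I * x * ((Real.cos t : ℝ) : ℂ))
      (Complex.I * x * ((-Real.sin t : ℝ) : ℂ)) t := h1.const_mul _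
  have h3 := h2.cexp
  convert h3 using 1
  · rfl
  simp only [gJA1, gJA]
  push_cast
  ring

lemma hasDerivAt_gJA1 (t : ℝ) : HasDerivAt (gJA1 x) (gJA2 x t) t := by
  have hs : HasDerivAt (fun t : ℝ => -(Complex.I * x * ((Real.sin t : ℝ) : ℂ)))
      (-(Complex.I * x * ((Real.cos t : ℝ) : ℂ))) t :=
    (((Real.hasDerivAt_sin t).ofReal_comp).const_mul (Complex.I * x)).neg
  have := hs.mul (hasDerivAt_gJA x t)
  convert this using 1
  · rfl
  · rfl
  simp only [gJA2, gJA1, gJA]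
  push_cast
  ring

lemma continuous_gJA : Continuous (gJA x) := by
  unfold gJA; fun_prop

lemma continuous_gJA1 : Continuous (gJA1 x) := by
  unfold gJA1 gJA; fun_prop

lemma continuous_gJA2 : Continuous (gJA2 x) := by
  unfold gJA2 gJA; fun_prop

lemma per_gJA : gJA x (2 * Real.pi) = gJA x 0 := by
  simp [gJA]

lemma per_gJA1 : gJA1 x (2 * Real.pi) = gJA1 x 0 := by
  simp [gJA1, gJA]

lemma h2pi : (0:ℝ) < 2 * Real.pi := by positivity

lemma coeff_step (f f' : ℝ → ℂ) (hf : ∀ t, HasDerivAt f (f' t) t) (hc : Continuous f')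
    (hper : f (2 * Real.pi) = f 0) {n : ℤ} (hn : n ≠ 0) :
    fourierCoeffOn h2pi f n = fourierCoeffOn h2pi f' n / (Complex.I * n) := by
  have h := fourierCoeffOn_of_hasDerivAt h2pi hn (fun t _ => hf t)
    (hc.intervalIntegrable _ _)
  rw [hper, sub_self, mul_zero, zero_sub] at h
  rw [h]
  have hπ : (Real.pi : ℂ) ≠ 0 := by exact_mod_cast Real.pi_ne_zero
  have hn' : (n : ℂ) ≠ 0 := Int.cast_ne_zero.mpr hn
  push_cast
  field_simp
  ring
end coeffs

lemma norm_gJA2_le (x t : ℝ) : ‖gJA2 x t‖ ≤ |x| + x^2 := by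
  have h1 : ‖gJA x t‖ = 1 := by
    have : gJA x t = Complex.exp (((x * Real.cos t : ℝ) : ℂ) * Complex.I) := by
      simp only [gJA]; push_cast; ring_nf
    rw [this, Complex.norm_exp_ofReal_mul_I]
  have h2 : ‖(-(Complex.I * x * Real.cos t) + (Complex.I * x * Real.sin t)^2 : ℂ)‖
      ≤ |x| + x^2 := by
    refine (norm_add_le _ _).trans ?_
    rw [norm_neg, norm_pow]
    have e1 : ‖(Complex.I * x * Real.cos t : ℂ)‖ = |x| * |Real.cos t| := by
      rw [norm_mul, norm_mul, Complex.norm_I, one_mul, Complex.norm_real,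
        Complex.norm_real, Real.norm_eq_abs, Real.norm_eq_abs]
    have e2 : ‖(Complex.I * x * Real.sin t : ℂ)‖ = |x| * |Real.sin t| := by
      rw [norm_mul, norm_mul, Complex.norm_I, one_mul, Complex.norm_real,
        Complex.norm_real, Real.norm_eq_abs, Real.norm_eq_abs]
    rw [e1, e2]
    have c1 : |x| * |Real.cos t| ≤ |x| := by
      nlinarith [Real.abs_cos_le_one t, abs_nonneg x]
    have c2 : (|x| * |Real.sin t|)^2 ≤ x^2 := by
      rw [mul_pow, _root_.sq_abs]
      have hs : |Real.sin t| ^ 2 ≤ 1 :=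
        pow_le_one₀ (abs_nonneg _) (Real.abs_sin_le_one t)
      nlinarith [sq_nonneg x]
    linarith
  calc ‖gJA2 x t‖ = ‖(-(Complex.I * x * Real.cos t) + (Complex.I * x * Real.sin t)^2 : ℂ)‖
        * ‖gJA x t‖ := by rw [gJA2, norm_mul]
    _ ≤ |x| + x^2 := by rw [h1, mul_one]; exact h2

lemma bound_coeff_gJA2 (x : ℝ) (n : ℤ) :
    ‖fourierCoeffOn h2pi (gJA2 x) n‖ ≤ |x| + x^2 := by
  rw [fourierCoeffOn_eq_integral]
  rw [norm_smul]
  have hb : ∀ t ∈ Set.uIoc (0:ℝ) (2*Real.pi),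
      ‖fourier (-n) (t : AddCircle (2*Real.pi - 0)) • gJA2 x t‖ ≤ |x| + x^2 := by
    intro t _
    rw [norm_smul]
    have : ‖fourier (-n) (t : AddCircle (2*Real.pi - 0))‖ = 1 := Circle.norm_coe _
    rw [this, one_mul]
    exact norm_gJA2_le x t
  have hI := intervalIntegral.norm_integral_le_of_norm_le_const hb
  have hx2 : (0:ℝ) ≤ |x| + x^2 := by positivity
  have hπ := Real.pi_pos
  have hnorm : ‖(1/(2*Real.pi - 0) : ℝ)‖ = 1/(2*Real.pi) := by
    rw [Real.norm_eq_abs, sub_zero, abs_of_pos (by positivity)]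
  rw [hnorm]
  calc (1/(2*Real.pi)) * ‖∫ t in (0:ℝ)..(2*Real.pi),
        fourier (-n) (t : AddCircle (2*Real.pi - 0)) • gJA2 x t‖
      ≤ (1/(2*Real.pi)) * ((|x| + x^2) * |2*Real.pi - 0|) := by
        have hp : (0:ℝ) ≤ 1/(2*Real.pi) := by positivity
        exact mul_le_mul_of_nonneg_left hI hp
    _ = |x| + x^2 := by
        have hp : (0:ℝ) < 2*Real.pi := by positivity
        rw [sub_zero, abs_of_pos hp, one_div, inv_mul_eq_div, mul_comm, mul_div_assoc]
        field_simp

lemma norm_coeff_gJA_le (x : ℝ) {n : ℤ} (hn : n ≠ 0) :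
    ‖fourierCoeffOn h2pi (gJA x) n‖ ≤ (|x| + x^2) * (1 / (n:ℝ)^2) := by
  have hstep1 := coeff_step (gJA x) (gJA1 x) (hasDerivAt_gJA x) (continuous_gJA1 x)
    (per_gJA x) hn
  have hstep2 := coeff_step (gJA1 x) (gJA2 x) (hasDerivAt_gJA1 x) (continuous_gJA2 x)
    (per_gJA1 x) hn
  rw [hstep1, hstep2]
  have hIn : ‖(Complex.I * (n : ℂ))‖ = |(n:ℝ)| := by
    rw [norm_mul, Complex.norm_I, one_mul, Complex.norm_intCast]
  rw [norm_div, norm_div, hIn, div_div, abs_mul_abs_self, ← pow_two]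
  have hb := bound_coeff_gJA2 x n
  have hn' : ((n:ℝ)) ≠ 0 := Int.cast_ne_zero.mpr hn
  have hpos : (0:ℝ) < (n:ℝ)^2 := by positivity
  rw [div_le_iff₀ hpos]
  calc ‖fourierCoeffOn h2pi (gJA2 x) n‖ ≤ |x| + x^2 := hb
    _ = (|x| + x^2) * (1 / (n:ℝ)^2) * ((n:ℝ) ^ 2) := by field_simp

lemma perJA (x : ℝ) : Function.Periodic (gJA x) (2*Real.pi) := by
  intro t; simp [gJA]

noncomputable def FJA (x : ℝ) : C(AddCircle (2*Real.pi), ℂ) :=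
  ⟨(perJA x).lift, continuous_coinduced_dom.mpr (continuous_gJA x)⟩

lemma FJA_coe (x t : ℝ) : FJA x (t : AddCircle (2*Real.pi)) = gJA x t :=
  (perJA x).lift_coe t

lemma coeF_integral (x : ℝ) (n : ℤ) :
    haveI : Fact (0 < 2*Real.pi) := ⟨h2pi⟩
    fourierCoeff (⇑(FJA x)) n
      = (1/(2*Real.pi) : ℝ) • ∫ t in (0:ℝ)..(2*Real.pi),
          Complex.exp (Complex.I * (x * Real.cos t - n * t)) := by
  haveI : Fact (0 < 2*Real.pi) := ⟨h2pi⟩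
  rw [fourierCoeff_eq_intervalIntegral (⇑(FJA x)) n 0, zero_add]
  congr 1
  refine intervalIntegral.integral_congr fun t _ => ?_
  rw [fourier_coe_apply, FJA_coe, smul_eq_mul, gJA, ← Complex.exp_add]
  congr 1
  have hπ : ((Real.pi : ℝ) : ℂ) ≠ 0 := by exact_mod_cast Real.pi_ne_zero
  push_cast
  field_simp
  ring

lemma coeOn_integral (x : ℝ) (n : ℤ) :
    fourierCoeffOn h2pi (gJA x) n
      = (1/(2*Real.pi) : ℝ) • ∫ t in (0:ℝ)..(2*Real.pi),
          Complex.exp (Complex.I * (x * Real.cos t - n * t)) := by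
  rw [fourierCoeffOn_eq_integral]
  simp only [sub_zero]
  congr 1
  refine intervalIntegral.integral_congr fun t _ => ?_
  rw [fourier_coe_apply, smul_eq_mul, gJA, ← Complex.exp_add]
  congr 1
  have hπ : ((Real.pi : ℝ) : ℂ) ≠ 0 := by exact_mod_cast Real.pi_ne_zero
  push_cast
  field_simp
  ring

lemma coeF_val (x : ℝ) (n : ℤ) :
    haveI : Fact (0 < 2*Real.pi) := ⟨h2pi⟩
    fourierCoeff (⇑(FJA x)) n = Complex.I ^ n * (besselJ n x : ℂ) := by
  rw [coeF_integral, Aval, Complex.real_smul]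
  have hπ : ((Real.pi : ℝ) : ℂ) ≠ 0 := by exact_mod_cast Real.pi_ne_zero
  push_cast
  field_simp

lemma coeF_on (x : ℝ) (n : ℤ) :
    haveI : Fact (0 < 2*Real.pi) := ⟨h2pi⟩
    fourierCoeff (⇑(FJA x)) n = fourierCoeffOn h2pi (gJA x) n :=
  (coeF_integral x n).trans (coeOn_integral x n).symm

lemma summJA (x : ℝ) :
    haveI : Fact (0 < 2*Real.pi) := ⟨h2pi⟩
    Summable (fourierCoeff (⇑(FJA x))) := by
  haveI : Fact (0 < 2*Real.pi) := ⟨h2pi⟩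
  apply Summable.of_norm_bounded_eventually (g := fun n : ℤ => (|x| + x^2) * (1/(n:ℝ)^2))
  · exact (summable_one_div_int_pow.mpr (by norm_num)).mul_left _
  · rw [Filter.eventually_cofinite]
    apply Set.Finite.subset (Set.finite_singleton (0:ℤ))
    intro n hn
    simp only [Set.mem_setOf_eq, not_le] at hn
    by_contra h0
    simp only [Set.mem_singleton_iff] at h0
    have := norm_coeff_gJA_le x h0
    rw [← coeF_on] at this
    exact absurd this (not_le.mpr hn)

/-- Jacobi–Anger expansion: the family `(i^ν J_ν(x) e^{iνθ})_{ν ∈ ℤ}` is summable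
with sum `exp (i x cos θ)`. -/
theorem stmt_5 (x θ : ℝ) :
    HasSum
      (fun ν : ℤ =>
        Complex.I ^ ν * (besselJ ν x : ℂ) * Complex.exp (Complex.I * ν * θ))
      (Complex.exp (Complex.I * x * Real.cos θ)) := by
  haveI : Fact (0 < 2*Real.pi) := ⟨h2pi⟩
  have H := has_pointwise_sum_fourier_series_of_summable (summJA x)
    ((θ : ℝ) : AddCircle (2*Real.pi))
  have hfun : (fun n : ℤ => fourierCoeff (⇑(FJA x)) n • fourier n ((θ:ℝ) : AddCircle (2*Real.pi)))
      = fun ν : ℤ => Complex.I ^ ν * (besselJ ν x : ℂ) * Complex.exp (Complex.I * ν * θ) := by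
    funext n
    rw [coeF_val, smul_eq_mul, fourier_coe_apply]
    have hπ : ((Real.pi : ℝ) : ℂ) ≠ 0 := by exact_mod_cast Real.pi_ne_zero
    have harg : (2 * (Real.pi:ℂ) * Complex.I * (n:ℂ) * (θ:ℂ) / ((2*Real.pi : ℝ):ℂ))
        = Complex.I * (n:ℂ) * (θ:ℂ) := by
      push_cast
      field_simp
    rw [harg]
  rw [hfun, FJA_coe] at H
  exact H
end

section
/- The squared Euclidean norm of (I − M)·w(r) equals N·(N² − |S(r)|²)/(N−1)²; equivalently, Σ_{p=1}^N |(w(r) − M·w(r))_p|² = (N/(N−1))² · (N − |S(r)|²/N). -/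
open scoped RealInnerProductSpace

/-- MUSIC model: `‖(I − M)·w(r)‖² = N·(N² − |S(r)|²)/(N−1)²`, i.e.
`Σ_p |((I − M)·w(r))_p|² = (N/(N−1))² · (N − |S(r)|²/N)`. -/
theorem stmt_7 (N : ℕ) (hN : 2 ≤ N) (k : ℝ) (hk : 0 < k)
    (θ : Fin N → EuclideanSpace ℝ (Fin 2)) (hθ : ∀ n, ‖θ n‖ = 1)
    (r rstar : EuclideanSpace ℝ (Fin 2))
    (w : Fin N → ℂ)
    (hw : ∀ p, w p = Complex.exp (-Complex.I * k * (⟪θ p, r⟫ : ℝ)))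
    (M : Matrix (Fin N) (Fin N) ℂ)
    (hM : ∀ m n, M m n = if m = n then 0
        else Complex.exp (-Complex.I * k * (⟪θ m - θ n, rstar⟫ : ℝ)) / ((N : ℂ) - 1))
    (S : ℂ)
    (hS : S = ∑ n, Complex.exp (Complex.I * k * (⟪θ n, rstar - r⟫ : ℝ))) :
    ∑ p, ‖((1 - M).mulVec w) p‖ ^ 2 =
      ((N : ℝ) / ((N : ℝ) - 1)) ^ 2 * ((N : ℝ) - ‖S‖ ^ 2 / (N : ℝ)) := by
  have hN0 : (0:ℝ) < (N:ℝ) := by positivity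
  have hN1R : ((N:ℝ) - 1) ≠ 0 := by
    have : (2:ℝ) ≤ (N:ℝ) := by exact_mod_cast hN
    linarith
  have hN1 : ((N:ℂ) - 1) ≠ 0 := by
    intro h
    apply hN1R
    have := congrArg Complex.re h
    simpa using this
  set a : Fin N → ℝ := fun n => k * ⟪θ n, rstar⟫ with ha
  set b : Fin N → ℝ := fun n => k * ⟪θ n, r⟫ with hb
  set u : Fin N → ℂ := fun n => Complex.exp (Complex.I * ((a n : ℂ) - (b n : ℂ))) with hu
  have hS' : S = ∑ n, u n := by
    rw [hS]
    refine Finset.sum_congr rfl fun n _ => ?_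
    simp only [hu]
    congr 1
    rw [inner_sub_right]
    push_cast [ha, hb]
    ring
  have habs_u : ∀ n, ‖u n‖ = 1 := by
    intro n
    simp only [hu, Complex.norm_exp]
    norm_num [Complex.mul_re, Complex.I_re, Complex.I_im]
  have key : ∀ p, ((1 - M).mulVec w) p
      = Complex.exp (-Complex.I * (a p : ℂ)) * ((N:ℂ) * u p - S) / ((N:ℂ) - 1) := by
    intro p
    rw [Matrix.sub_mulVec, Matrix.one_mulVec]
    simp only [Pi.sub_apply, Matrix.mulVec, dotProduct]
    have hterm : ∀ n, M p n * w n
        = (if p = n then (0:ℂ)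
          else Complex.exp (-Complex.I * (a p : ℂ)) * u n / ((N:ℂ) - 1)) := by
      intro n
      rw [hM, hw]
      by_cases h : p = n
      · simp [h]
      · simp only [h, if_false]
        rw [div_mul_eq_mul_div]
        congr 1
        rw [mul_comm (Complex.exp (-Complex.I * (a p : ℂ))) (u n), hu,
          ← Complex.exp_add, ← Complex.exp_add, inner_sub_left]
        congr 1
        push_cast [ha, hb]
        ring
    rw [Finset.sum_congr rfl fun n _ => hterm n]
    have hsplit : ∀ n, (if p = n then (0:ℂ)
          else Complex.exp (-Complex.I * (a p : ℂ)) * u n / ((N:ℂ) - 1))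
        = Complex.exp (-Complex.I * (a p : ℂ)) * u n / ((N:ℂ) - 1)
          - (if p = n then Complex.exp (-Complex.I * (a p : ℂ)) * u n / ((N:ℂ) - 1) else 0) := by
      intro n; by_cases h : p = n <;> simp [h]
    rw [Finset.sum_congr rfl fun n _ => hsplit n, Finset.sum_sub_distrib,
      Finset.sum_ite_eq Finset.univ p
        (fun n => Complex.exp (-Complex.I * (a p : ℂ)) * u n / ((N:ℂ) - 1))]
    simp only [Finset.mem_univ, if_true]
    rw [hw]
    have hwp : Complex.exp (-Complex.I * (k:ℂ) * ((⟪θ p, r⟫ : ℝ) : ℂ))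
        = Complex.exp (-Complex.I * (a p : ℂ)) * u p := by
      rw [hu, ← Complex.exp_add]
      congr 1
      push_cast [ha, hb]
      ring
    rw [hwp]
    have hsum2 : ∑ x, Complex.exp (-Complex.I * (a p : ℂ)) * u x / ((N:ℂ) - 1)
        = Complex.exp (-Complex.I * (a p : ℂ)) * (∑ x, u x) / ((N:ℂ) - 1) := by
      rw [← Finset.sum_div, ← Finset.mul_sum]
    rw [hsum2, ← hS']
    field_simp
    ring
  have habs : ∀ p, ‖((1 - M).mulVec w) p‖ ^ 2
      = Complex.normSq ((N:ℂ) * u p - S) / ((N:ℝ) - 1) ^ 2 := by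
    intro p
    rw [key p, norm_div, norm_mul, Complex.norm_exp]
    have h1 : (-Complex.I * (a p : ℂ)).re = 0 := by
      simp [Complex.mul_re]
    rw [h1, Real.exp_zero, one_mul]
    have h2 : ‖(N:ℂ) - 1‖ = (N:ℝ) - 1 := by
      have : ((N:ℂ) - 1) = (((N:ℝ) - 1 : ℝ) : ℂ) := by push_cast; ring
      rw [this, Complex.norm_real, Real.norm_eq_abs, abs_of_pos]
      have : (2:ℝ) ≤ (N:ℝ) := by exact_mod_cast hN
      linarith
    rw [h2, div_pow, Complex.sq_norm]
  rw [Finset.sum_congr rfl fun p _ => habs p, ← Finset.sum_div]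
  have hsum : ∑ p, Complex.normSq ((N:ℂ) * u p - S)
      = (N:ℝ)^3 - (N:ℝ) * Complex.normSq S := by
    have hterm : ∀ p, Complex.normSq ((N:ℂ) * u p - S)
        = (N:ℝ)^2 + Complex.normSq S - 2 * (((N:ℂ) * u p) * (starRingEnd ℂ) S).re := by
      intro p
      rw [Complex.normSq_sub, map_mul, Complex.normSq_natCast]
      have : Complex.normSq (u p) = 1 := by
        rw [← Complex.sq_norm, habs_u p]; norm_num
      rw [this]
      ring
    rw [Finset.sum_congr rfl fun p _ => hterm p]
    rw [Finset.sum_sub_distrib, Finset.sum_const, Finset.card_univ, Fintype.card_fin]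
    have h3 : ∑ p, (((N:ℂ) * u p) * (starRingEnd ℂ) S).re
        = ((∑ p, ((N:ℂ) * u p)) * (starRingEnd ℂ) S).re := by
      rw [Finset.sum_mul, Complex.re_sum]
    rw [← Finset.mul_sum, h3, ← Finset.mul_sum, ← hS', mul_assoc, Complex.mul_conj,
      nsmul_eq_mul]
    push_cast
    simp only [Complex.mul_re, Complex.natCast_re, Complex.natCast_im, Complex.ofReal_re,
      Complex.ofReal_im]
    ring
  rw [hsum, ← Complex.sq_norm S]
  have hNR : (N:ℝ) ≠ 0 := ne_of_gt hN0
  field_simp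
end

section
/- (Unique determination of the anomaly, Corollary 3.2.) Suppose there exist indices a, b, c, d ∈ {1,…,N} such that the vectors θ_a − θ_b and θ_c − θ_d are linearly independent in ℝ², and suppose k·|r − r⋆| < π. Then (I − M)·w(r) = 0 if and only if r = r⋆; equivalently, |S(r)| = N if and only if r = r⋆. -/
open scoped RealInnerProductSpace

/-- Unique determination of the anomaly (Corollary 3.2): if some two antenna-direction
differences `θ_a − θ_b` and `θ_c − θ_d` are linearly independent and `k·|r − r⋆| < π`,
then `(I − M)·w(r) = 0 ↔ r = r⋆`, equivalently `|S(r)| = N ↔ r = r⋆`. -/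
theorem stmt_11 (N : ℕ) (hN : 2 ≤ N) (k : ℝ) (hk : 0 < k)
    (θ : Fin N → EuclideanSpace ℝ (Fin 2)) (hθ : ∀ n, ‖θ n‖ = 1)
    (r rstar : EuclideanSpace ℝ (Fin 2))
    (w : Fin N → ℂ)
    (hw : ∀ p, w p = Complex.exp (-Complex.I * k * (⟪θ p, r⟫ : ℝ)))
    (M : Matrix (Fin N) (Fin N) ℂ)
    (hM : ∀ m n, M m n = if m = n then 0
        else Complex.exp (-Complex.I * k * (⟪θ m - θ n, rstar⟫ : ℝ)) / ((N : ℂ) - 1))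
    (S : ℂ)
    (hS : S = ∑ n, Complex.exp (Complex.I * k * (⟪θ n, rstar - r⟫ : ℝ)))
    (a b c d : Fin N)
    (hli : LinearIndependent ℝ ![θ a - θ b, θ c - θ d])
    (hdist : k * ‖r - rstar‖ < Real.pi) :
    ((1 - M).mulVec w = 0 ↔ r = rstar) ∧ (‖S‖ = N ↔ r = rstar) := by
  set z : Fin N → ℂ := fun n => Complex.exp (Complex.I * k * (⟪θ n, rstar - r⟫ : ℝ)) with hzdef
  set E : Fin N → ℂ := fun m => Complex.exp (-Complex.I * k * (⟪θ m, rstar⟫ : ℝ)) with hEdef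
  have hS' : S = ∑ n, z n := hS
  have hzabs : ∀ n, ‖z n‖ = 1 := by
    intro n
    simp [hzdef, Complex.norm_exp, Complex.mul_re]
  have hNC1 : ((N : ℂ)) ≠ 1 := by
    intro h
    have : N = 1 := by exact_mod_cast h
    omega
  have hNC : ((N : ℂ) - 1) ≠ 0 := sub_ne_zero.mpr hNC1
  have hNpos : (0 : ℝ) < N := by positivity
  -- pointwise product formula
  have hprod : ∀ m n, M m n * w n =
      if m = n then 0 else E m / ((N : ℂ) - 1) * z n := by
    intro m n
    rw [hM, hw]
    split
    · simp
    · rw [div_mul_eq_mul_div, div_mul_eq_mul_div]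
      congr 1
      rw [← Complex.exp_add, ← Complex.exp_add]
      congr 1
      have h1 : (⟪θ m - θ n, rstar⟫ : ℝ) = ⟪θ m, rstar⟫ - ⟪θ n, rstar⟫ :=
        inner_sub_left _ _ _
      have h2 : (⟪θ n, rstar - r⟫ : ℝ) = ⟪θ n, rstar⟫ - ⟪θ n, r⟫ :=
        inner_sub_right _ _ _
      rw [h1, h2]
      push_cast
      ring
  have hsum : ∀ m, ∑ n, M m n * w n = E m / ((N : ℂ) - 1) * (S - z m) := by
    intro m
    have step : ∀ n, (if m = n then (0 : ℂ) else E m / ((N : ℂ) - 1) * z n) =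
        E m / ((N : ℂ) - 1) * z n - (if m = n then E m / ((N : ℂ) - 1) * z n else 0) := by
      intro n; split <;> simp
    calc ∑ n, M m n * w n
        = ∑ n, (if m = n then (0 : ℂ) else E m / ((N : ℂ) - 1) * z n) := by
          simp_rw [hprod]
      _ = (∑ n, E m / ((N : ℂ) - 1) * z n)
            - ∑ n, (if m = n then E m / ((N : ℂ) - 1) * z n else 0) := by
          simp_rw [step, Finset.sum_sub_distrib]
      _ = E m / ((N : ℂ) - 1) * S - E m / ((N : ℂ) - 1) * z m := by
          rw [← Finset.mul_sum, ← hS', Finset.sum_ite_eq, if_pos (Finset.mem_univ m)]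
      _ = E m / ((N : ℂ) - 1) * (S - z m) := by ring
  have hwm : ∀ m, w m = E m * z m := by
    intro m
    rw [hw]
    rw [hEdef, hzdef]
    rw [← Complex.exp_add]
    congr 1
    have h2 : (⟪θ m, rstar - r⟫ : ℝ) = ⟪θ m, rstar⟫ - ⟪θ m, r⟫ := inner_sub_right _ _ _
    rw [h2]
    push_cast
    ring
  -- the matrix condition is equivalent to N • z m = S for all m
  have hmain : (1 - M).mulVec w = 0 ↔ ∀ m, (N : ℂ) * z m = S := by
    constructor
    · intro h m
      have h0 := congrFun h m
      have h1 : w m - ∑ n, M m n * w n = 0 := by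
        simpa [Matrix.mulVec, dotProduct, sub_mul, Matrix.sub_apply,
          Matrix.one_apply, ite_mul, Finset.sum_sub_distrib, Finset.sum_ite_eq] using h0
      rw [hsum m, hwm m] at h1
      have hE0 : E m ≠ 0 := Complex.exp_ne_zero _
      have h2 : E m * ((N : ℂ) * z m - S) = 0 := by
        field_simp at h1
        linear_combination h1
      rcases mul_eq_zero.mp h2 with h3 | h3
      · exact absurd h3 hE0
      · exact sub_eq_zero.mp h3
    · intro h
      funext m
      have : (1 - M).mulVec w m = w m - ∑ n, M m n * w n := by
        simp [Matrix.mulVec, dotProduct, sub_mul, Matrix.sub_apply,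
          Matrix.one_apply, ite_mul, Finset.sum_sub_distrib, Finset.sum_ite_eq]
      rw [Pi.zero_apply, this, hsum m, hwm m, ← h m]
      field_simp
      ring
  -- |S| = N implies r = rstar
  have H4 : ‖S‖ = N → r = rstar := by
    intro hSN
    have hS0 : S ≠ 0 := by
      intro h; rw [h] at hSN; simp at hSN; linarith
    have hcS0 : (starRingEnd ℂ) S ≠ 0 := by simpa using hS0
    -- each term of the sum has real part ≤ N, and they sum to N²
    have hsum1 : ∑ n, ((starRingEnd ℂ) S * z n).re = (N : ℝ) * N := by
      have : ∑ n, (starRingEnd ℂ) S * z n = (starRingEnd ℂ) S * S := by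
        rw [← Finset.mul_sum, ← hS']
      calc ∑ n, ((starRingEnd ℂ) S * z n).re
          = (∑ n, (starRingEnd ℂ) S * z n).re := (Complex.re_sum _ _).symm
        _ = ((starRingEnd ℂ) S * S).re := by rw [this]
        _ = Complex.normSq S := by rw [mul_comm, Complex.mul_conj]; simp
        _ = (N : ℝ) * N := by
            rw [← Complex.sq_norm, hSN]; ring
    have hle : ∀ n ∈ Finset.univ, ((starRingEnd ℂ) S * z n).re ≤ (N : ℝ) := by
      intro n _
      calc ((starRingEnd ℂ) S * z n).re ≤ ‖(starRingEnd ℂ) S * z n‖ :=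
            Complex.re_le_norm _
        _ = (N : ℝ) := by rw [norm_mul, Complex.norm_conj, hSN, hzabs, mul_one]
    have heq : ∀ n ∈ Finset.univ, ((starRingEnd ℂ) S * z n).re = (N : ℝ) := by
      have htot : ∑ n, ((starRingEnd ℂ) S * z n).re = ∑ _n : Fin N, (N : ℝ) := by
        rw [hsum1, Finset.sum_const, Finset.card_univ, Fintype.card_fin, nsmul_eq_mul]
      exact fun n hn => ((Finset.sum_eq_sum_iff_of_le hle).mp htot n hn)
    -- hence each conj S * z n = N, so z is constant
    have hzconst : ∀ n, z n = (N : ℂ) / (starRingEnd ℂ) S := by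
      intro n
      have hre : ((starRingEnd ℂ) S * z n).re = (N : ℝ) := heq n (Finset.mem_univ n)
      have habs : ‖(starRingEnd ℂ) S * z n‖ = (N : ℝ) := by
        rw [norm_mul, Complex.norm_conj, hSN, hzabs, mul_one]
      have him : ((starRingEnd ℂ) S * z n).im = 0 := by
        have h1 : Complex.normSq ((starRingEnd ℂ) S * z n) = (N : ℝ) * N := by
          rw [← Complex.sq_norm, habs]; ring
        rw [Complex.normSq_apply, hre] at h1
        nlinarith [sq_nonneg (((starRingEnd ℂ) S * z n).im)]
      have : (starRingEnd ℂ) S * z n = (N : ℂ) := by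
        apply Complex.ext <;> simp [hre, him]
      field_simp
      linear_combination this
    -- deduce orthogonality
    have key : ∀ p q : Fin N, (⟪θ p - θ q, rstar - r⟫ : ℝ) = 0 := by
      intro p q
      set x : ℝ := (⟪θ p - θ q, rstar - r⟫ : ℝ) with hxdef
      have hxsub : x = (⟪θ p, rstar - r⟫ : ℝ) - (⟪θ q, rstar - r⟫ : ℝ) :=
        inner_sub_left _ _ _
      have hpq : z p = z q := by rw [hzconst p, hzconst q]
      have hx1 : Complex.exp (Complex.I * k * x) = 1 := by
        have h0 : Complex.exp (Complex.I * k * (⟪θ p, rstar - r⟫ : ℝ)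
            - Complex.I * k * (⟪θ q, rstar - r⟫ : ℝ)) = 1 := by
          rw [Complex.exp_sub]
          rw [show Complex.exp (Complex.I * k * (⟪θ p, rstar - r⟫ : ℝ)) = z p from rfl]
          rw [show Complex.exp (Complex.I * k * (⟪θ q, rstar - r⟫ : ℝ)) = z q from rfl]
          rw [hpq, div_self (Complex.exp_ne_zero _)]
        rw [← h0]
        congr 1
        rw [hxsub]
        push_cast
        ring
      obtain ⟨m', hm'⟩ := Complex.exp_eq_one_iff.mp hx1
      have hreal : k * x = m' * (2 * Real.pi) := by
        have h2 : Complex.I * ((k * x : ℝ) : ℂ) = Complex.I * ((m' * (2 * Real.pi) : ℝ) : ℂ) := by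
          push_cast at hm' ⊢
          linear_combination hm'
        have h3 := mul_left_cancel₀ Complex.I_ne_zero h2
        exact_mod_cast h3
      have hnorm2 : ‖θ p - θ q‖ ≤ 2 := by
        calc ‖θ p - θ q‖ ≤ ‖θ p‖ + ‖θ q‖ := norm_sub_le _ _
          _ = 2 := by rw [hθ p, hθ q]; norm_num
      have hxb : |x| ≤ 2 * ‖rstar - r‖ := by
        calc |x| ≤ ‖θ p - θ q‖ * ‖rstar - r‖ := abs_real_inner_le_norm _ _
          _ ≤ 2 * ‖rstar - r‖ := by
            apply mul_le_mul_of_nonneg_right hnorm2 (norm_nonneg _)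
      have hnrev : ‖rstar - r‖ = ‖r - rstar‖ := norm_sub_rev _ _
      have hkx : |k * x| < 2 * Real.pi := by
        rw [abs_mul, abs_of_pos hk]
        calc k * |x| ≤ k * (2 * ‖rstar - r‖) := by
              exact mul_le_mul_of_nonneg_left hxb (le_of_lt hk)
          _ = 2 * (k * ‖r - rstar‖) := by rw [hnrev]; ring
          _ < 2 * Real.pi := by linarith
      have hm0 : m' = 0 := by
        by_contra hne
        have h1 : (1 : ℝ) ≤ |(m' : ℝ)| := by
          exact_mod_cast Int.one_le_abs (by omega)
        have : 2 * Real.pi ≤ |k * x| := by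
          rw [hreal, abs_mul]
          have hpi : 0 < 2 * Real.pi := by positivity
          nlinarith [abs_of_pos hpi]
        linarith
      have hkx0 : k * x = 0 := by rw [hreal, hm0]; simp
      rcases mul_eq_zero.mp hkx0 with h | h
      · exact absurd h (ne_of_gt hk)
      · exact h
    have hab : (⟪θ a - θ b, rstar - r⟫ : ℝ) = 0 := key a b
    have hcd : (⟪θ c - θ d, rstar - r⟫ : ℝ) = 0 := key c d
    have hcard : Fintype.card (Fin 2) = Module.finrank ℝ (EuclideanSpace ℝ (Fin 2)) := by
      simp [finrank_euclideanSpace]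
    let B := basisOfLinearIndependentOfCardEqFinrank hli hcard
    have hB : ∀ i, (⟪B i, rstar - r⟫ : ℝ) = 0 := by
      intro i
      have hBc : ⇑B = ![θ a - θ b, θ c - θ d] :=
        coe_basisOfLinearIndependentOfCardEqFinrank hli hcard
      fin_cases i
      · rw [hBc]; exact hab
      · rw [hBc]; exact hcd
    have hv0 : rstar - r = 0 := by
      have hrepr := B.sum_repr (rstar - r)
      have hself : (⟪rstar - r, rstar - r⟫ : ℝ) = 0 := by
        calc (⟪rstar - r, rstar - r⟫ : ℝ)
            = ⟪∑ i, B.repr (rstar - r) i • B i, rstar - r⟫ := by rw [hrepr]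
          _ = ∑ i, B.repr (rstar - r) i * ⟪B i, rstar - r⟫ := by
              rw [sum_inner]; simp only [real_inner_smul_left]
          _ = 0 := by simp only [hB, mul_zero, Finset.sum_const_zero]
      exact inner_self_eq_zero.mp hself
    exact (sub_eq_zero.mp hv0).symm
  -- r = rstar implies the N z m = S condition
  have H1 : r = rstar → ∀ m, (N : ℂ) * z m = S := by
    intro h m
    have hz1 : ∀ n, z n = 1 := by
      intro n
      rw [hzdef]
      simp [h]
    rw [hz1 m, hS']
    simp [hz1]
  have H2 : r = rstar → ‖S‖ = N := by
    intro h
    have := H1 h a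
    rw [← this, norm_mul, hzabs a, mul_one]
    simp
  constructor
  · constructor
    · intro h
      apply H4
      have := hmain.mp h a
      rw [← this, norm_mul, hzabs a, mul_one]
      simp
    · intro h
      exact hmain.mpr (H1 h)
  · exact ⟨H4, H2⟩
end
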